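/- Explicit barrier construction: assume the steady assumptions and that there exists an index i₀ such that for every r ∈ ℝ and every choice of {p_j}_{j≠i₀}, F(r, p_1,…,p_{i₀},…,p_N) → −∞ as p_{i₀} → +∞. Then there exist constants K₁, K₂ > 0 such that the functions u⁺(x) := K₁ − K₂ρ(x,O) and u⁻(x) := −K₁ + K₂ρ(x,O) satisfy: u⁺ is a viscosity supersolution of problem (P), u⁻ is a viscosity subsolution of problem (P), and u⁻ ≤ u⁺ on all of Γ. -/

import Mathlib

open Set Filter Topology

namespace Paper

/-- Data of the junction problem (P): a junction with `N` edges of lengths `ℓ i`,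
glued at the junction point `O` (parameter `0` of each edge), with a (possibly
degenerate) diffusion `a i`, Hamiltonians `H i`, a Kirchhoff nonlinearity `F`,
Dirichlet data `h i` and a constant `lam > 0`.  Functions on the junction `Γ`
are represented edge-wise: `u : Fin N → ℝ → ℝ`, where only the values of
`u i` on `[0, ℓ i]` are relevant and `u i 0` represents the value at `O`. -/
structure Data (N : ℕ) where
  ℓ : Fin N → ℝ
  ℓ_pos : ∀ i, 0 < ℓ i
  lam : ℝ
  lam_pos : 0 < lam
  a : Fin N → ℝ → ℝ
  a_nonneg : ∀ i, ∀ t ∈ Set.Icc (0:ℝ) (ℓ i), 0 ≤ a i t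
  a_cont : ∀ i, ContinuousOn (a i) (Set.Icc 0 (ℓ i))
  H : Fin N → ℝ → ℝ → ℝ
  H_cont : ∀ i, ContinuousOn (fun q : ℝ × ℝ => H i q.1 q.2)
      ((Set.Icc 0 (ℓ i)) ×ˢ (Set.univ : Set ℝ))
  F : ℝ → (Fin N → ℝ) → ℝ
  F_cont : Continuous (fun q : ℝ × (Fin N → ℝ) => F q.1 q.2)
  h : Fin N → ℝ

variable {N : ℕ}

/-- A family of edge functions defines a function on `Γ`: values at `O` agree. -/
def Glued (u : Fin N → ℝ → ℝ) : Prop := ∀ i j : Fin N, u i 0 = u j 0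

/-- `u ∈ USC(Γ)`. -/
def IsUSC (D : Data N) (u : Fin N → ℝ → ℝ) : Prop :=
  ∀ i, UpperSemicontinuousOn (u i) (Set.Icc 0 (D.ℓ i))

/-- `u ∈ LSC(Γ)`. -/
def IsLSC (D : Data N) (u : Fin N → ℝ → ℝ) : Prop :=
  ∀ i, LowerSemicontinuousOn (u i) (Set.Icc 0 (D.ℓ i))

/-- Test functions in `C²(Γ)` (edge-wise C², glued at `O`). -/
def IsTest (φ : Fin N → ℝ → ℝ) : Prop :=
  Glued φ ∧ ∀ i, ContDiff ℝ 2 (φ i)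

/-- `G_i(r,p,X,x) = λ r − a_i(x) X + H_i(x,p)`. -/
def G (D : Data N) (i : Fin N) (r p X t : ℝ) : ℝ :=
  D.lam * r - D.a i t * X + D.H i t p

/-- Local maximum point of an edge-wise function at an interior edge point. -/
def LocalMaxEdge (D : Data N) (w : Fin N → ℝ → ℝ) (i : Fin N) (t : ℝ) : Prop :=
  ∃ δ > 0, ∀ s ∈ Set.Icc (0:ℝ) (D.ℓ i), |s - t| < δ → w i s ≤ w i t

def LocalMinEdge (D : Data N) (w : Fin N → ℝ → ℝ) (i : Fin N) (t : ℝ) : Prop :=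
  ∃ δ > 0, ∀ s ∈ Set.Icc (0:ℝ) (D.ℓ i), |s - t| < δ → w i t ≤ w i s

/-- Local maximum point at the junction point `O`. -/
def LocalMaxO (D : Data N) (w : Fin N → ℝ → ℝ) : Prop :=
  ∃ δ > 0, ∀ j, ∀ s ∈ Set.Icc (0:ℝ) (D.ℓ j), s < δ → w j s ≤ w j 0

def LocalMinO (D : Data N) (w : Fin N → ℝ → ℝ) : Prop :=
  ∃ δ > 0, ∀ j, ∀ s ∈ Set.Icc (0:ℝ) (D.ℓ j), s < δ → w j 0 ≤ w j s

/-- Local maximum point at the boundary vertex `v_i` (parameter `ℓ i`). -/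
def LocalMaxVert (D : Data N) (w : Fin N → ℝ → ℝ) (i : Fin N) : Prop :=
  ∃ δ > 0, ∀ s ∈ Set.Icc (0:ℝ) (D.ℓ i), D.ℓ i - s < δ → w i s ≤ w i (D.ℓ i)

def LocalMinVert (D : Data N) (w : Fin N → ℝ → ℝ) (i : Fin N) : Prop :=
  ∃ δ > 0, ∀ s ∈ Set.Icc (0:ℝ) (D.ℓ i), D.ℓ i - s < δ → w i (D.ℓ i) ≤ w i s

/-- Viscosity subsolution of problem (P), junction viscosity sense. -/
def IsSubsol (D : Data N) (u : Fin N → ℝ → ℝ) : Prop :=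
  IsUSC D u ∧ Glued u ∧
  ∀ φ : Fin N → ℝ → ℝ, IsTest φ →
    ((∀ i, ∀ t ∈ Set.Ioo (0:ℝ) (D.ℓ i),
        LocalMaxEdge D (fun j s => u j s - φ j s) i t →
        G D i (u i t) (deriv (φ i) t) (deriv (deriv (φ i)) t) t ≤ 0) ∧
     (LocalMaxO D (fun j s => u j s - φ j s) →
        (∃ i, G D i (u i 0) (deriv (φ i) 0) (deriv (deriv (φ i)) 0) 0 ≤ 0) ∨
        (∀ i, D.F (u i 0) (fun j => deriv (φ j) 0) ≤ 0)) ∧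
     (∀ i, LocalMaxVert D (fun j s => u j s - φ j s) i →
        G D i (u i (D.ℓ i)) (deriv (φ i) (D.ℓ i)) (deriv (deriv (φ i)) (D.ℓ i)) (D.ℓ i) ≤ 0 ∨
        u i (D.ℓ i) ≤ D.h i))

/-- Viscosity supersolution of problem (P), junction viscosity sense. -/
def IsSupersol (D : Data N) (v : Fin N → ℝ → ℝ) : Prop :=
  IsLSC D v ∧ Glued v ∧
  ∀ φ : Fin N → ℝ → ℝ, IsTest φ →
    ((∀ i, ∀ t ∈ Set.Ioo (0:ℝ) (D.ℓ i),
        LocalMinEdge D (fun j s => v j s - φ j s) i t →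
        0 ≤ G D i (v i t) (deriv (φ i) t) (deriv (deriv (φ i)) t) t) ∧
     (LocalMinO D (fun j s => v j s - φ j s) →
        (∃ i, 0 ≤ G D i (v i 0) (deriv (φ i) 0) (deriv (deriv (φ i)) 0) 0) ∨
        (∀ i, 0 ≤ D.F (v i 0) (fun j => deriv (φ j) 0))) ∧
     (∀ i, LocalMinVert D (fun j s => v j s - φ j s) i →
        0 ≤ G D i (v i (D.ℓ i)) (deriv (φ i) (D.ℓ i)) (deriv (deriv (φ i)) (D.ℓ i)) (D.ℓ i) ∨
        D.h i ≤ v i (D.ℓ i)))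

/-- Assumption (Ham) for the Hamiltonian `H i`, with constant `C`. -/
def Ham (D : Data N) (C : ℝ) (i : Fin N) : Prop :=
  (∀ t ∈ Set.Icc (0:ℝ) (D.ℓ i), ∀ s ∈ Set.Icc (0:ℝ) (D.ℓ i), ∀ p : ℝ,
      |D.H i t p - D.H i s p| ≤ C * (1 + |p|) * |t - s|) ∧
  (∀ t ∈ Set.Icc (0:ℝ) (D.ℓ i), ∀ p q : ℝ, |D.H i t p - D.H i t q| ≤ C * |p - q|)

/-- Assumption (Hcoercive) for `H i` on the set `S`, with constant `C`. -/
def Coercive (D : Data N) (C : ℝ) (i : Fin N) (S : Set ℝ) : Prop :=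
  ∀ t ∈ S, ∀ p : ℝ, C⁻¹ * |p| - C ≤ D.H i t p

/-- Assumption (hyp-diff) for the diffusion `a i`. -/
def HypDiff (D : Data N) (i : Fin N) : Prop :=
  ∃ σ : ℝ → ℝ, (∃ C : NNReal, LipschitzOnWith C σ (Set.Icc 0 (D.ℓ i))) ∧
    ∀ t ∈ Set.Icc (0:ℝ) (D.ℓ i), D.a i t = (σ t) ^ 2

/-- Assumption (hyp-kirch) for the Kirchhoff nonlinearity `F`. -/
def Kirchhoff (D : Data N) : Prop :=
  (∀ (r s : ℝ) (p q : Fin N → ℝ), s ≤ r → (∀ i, p i ≤ q i) → D.F s q ≤ D.F r p) ∧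
  (∀ (r s : ℝ) (p q : Fin N → ℝ), s ≤ r → (∀ i, p i ≤ q i) → (∃ j, p j < q j) →
      D.F s q < D.F r p) ∧
  (∀ (i : Fin N) (r : ℝ) (p : Fin N → ℝ),
      Filter.Tendsto (fun z : ℝ => D.F r (Function.update p i z))
        Filter.atBot Filter.atTop)

/-- The steady assumptions (2.9). -/
def Steady (D : Data N) (C : ℝ) : Prop :=
  0 < C ∧ (∀ i, Ham D C i) ∧ (∀ i, HypDiff D i) ∧
  (∀ i, D.a i 0 = 0 → Coercive D C i (Set.Icc 0 (D.ℓ i))) ∧ Kirchhoff D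

/-- Assumption (hyp-dir). -/
def HypDir (D : Data N) (C : ℝ) : Prop :=
  ∀ i, 0 < D.a i (D.ℓ i) ∨
    ∃ δ > 0, Coercive D C i (Set.Icc (D.ℓ i - δ) (D.ℓ i))




/-- Second-derivative test at a local minimum of a `C²` function. -/
lemma deriv2_nonneg_of_isLocalMin {g : ℝ → ℝ} (hg : ContDiff ℝ 2 g) {t : ℝ}
    (h : IsLocalMin g t) : 0 ≤ deriv (deriv g) t := by
  by_contra hneg
  push_neg at hneg
  have hdiff : Differentiable ℝ g := hg.differentiable (by norm_num)
  have hg2 : ContDiff ℝ (1 + 1) g := by rw [one_add_one_eq_two]; exact hg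
  have hd1 : ContDiff ℝ 1 (deriv g) := (contDiff_succ_iff_deriv.mp hg2).2.2
  have hd' : Differentiable ℝ (deriv g) := hd1.differentiable (by norm_num)
  have h0 : deriv g t = 0 := h.deriv_eq_zero
  have hs : Tendsto (slope (deriv g) t) (𝓝[≠] t) (𝓝 (deriv (deriv g) t)) :=
    hasDerivAt_iff_tendsto_slope.1 (hd' t).hasDerivAt
  have hs' : Tendsto (slope (deriv g) t) (𝓝[>] t) (𝓝 (deriv (deriv g) t)) :=
    hs.mono_left (nhdsWithin_mono _ fun x hx => ne_of_gt hx)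
  have hev : ∀ᶠ s in 𝓝[>] t, slope (deriv g) t s < 0 := hs'.eventually_lt_const hneg
  have hev2 : ∀ᶠ s in 𝓝[>] t, deriv g s < 0 := by
    filter_upwards [hev, self_mem_nhdsWithin] with s h1 h2
    have hst : (0:ℝ) < s - t := sub_pos.2 h2
    rw [slope_def_field, h0, sub_zero] at h1
    rcases div_neg_iff.1 h1 with ⟨_, h4⟩ | ⟨h3, _⟩
    · linarith
    · exact h3
  obtain ⟨u, hu, hsub⟩ := mem_nhdsGT_iff_exists_Ioo_subset.1 hev2
  have h' : ∀ᶠ s in 𝓝 t, g t ≤ g s := h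
  obtain ⟨ε, hε, hloc⟩ := Metric.eventually_nhds_iff.1 h'
  set s₀ : ℝ := min u (t + ε) with hs₀
  have hts₀ : t < s₀ := lt_min hu (by linarith)
  set s₁ : ℝ := (t + s₀) / 2 with hs₁
  have hts₁ : t < s₁ := by simp only [hs₁]; linarith
  have hs₁u : s₁ < u := by
    have : s₀ ≤ u := min_le_left _ _
    simp only [hs₁]; linarith
  have anti : StrictAntiOn g (Icc t s₁) := by
    refine strictAntiOn_of_deriv_neg (convex_Icc t s₁) hdiff.continuous.continuousOn ?_
    intro x hx
    rw [interior_Icc] at hx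
    exact hsub ⟨hx.1, lt_trans hx.2 hs₁u⟩
  have hlt : g s₁ < g t :=
    anti (left_mem_Icc.2 hts₁.le) (right_mem_Icc.2 hts₁.le) hts₁
  have hdist : dist s₁ t < ε := by
    rw [Real.dist_eq, abs_of_pos (by linarith : (0:ℝ) < s₁ - t)]
    have : s₀ ≤ t + ε := min_le_right _ _
    simp only [hs₁]; linarith
  exact absurd (hloc hdist) (not_le.2 hlt)

/-- At a local minimum of `s ↦ (c + m s) − φ s` with `φ` of class `C²`,
`φ' = m` and `φ'' ≤ 0`. -/
lemma key_min {φ : ℝ → ℝ} (hφ : ContDiff ℝ 2 φ) {c m t : ℝ}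
    (h : IsLocalMin (fun s => (c + m * s) - φ s) t) :
    deriv φ t = m ∧ deriv (deriv φ) t ≤ 0 := by
  have hφd : Differentiable ℝ φ := hφ.differentiable (by norm_num)
  have hlin : ∀ s : ℝ, HasDerivAt (fun x : ℝ => c + m * x) m s := fun s => by
    simpa using ((hasDerivAt_id s).const_mul m).const_add c
  have hgd : ∀ s : ℝ, HasDerivAt (fun x => (c + m * x) - φ x) (m - deriv φ s) s :=
    fun s => (hlin s).sub (hφd s).hasDerivAt
  have hder : deriv (fun x => (c + m * x) - φ x) = fun s => m - deriv φ s :=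
    funext fun s => (hgd s).deriv
  have h0 : deriv (fun x => (c + m * x) - φ x) t = 0 := h.deriv_eq_zero
  rw [hder] at h0
  change m - deriv φ t = 0 at h0
  have hd1 : deriv φ t = m := by linarith
  have hg2 : ContDiff ℝ 2 (fun x => (c + m * x) - φ x) :=
    (contDiff_const.add (contDiff_const.mul contDiff_id)).sub hφ
  have h2 := deriv2_nonneg_of_isLocalMin hg2 h
  rw [hder, deriv_const_sub] at h2
  exact ⟨hd1, by linarith⟩

/-- At a local maximum of `s ↦ (c + m s) − φ s` with `φ` of class `C²`,
`φ' = m` and `φ'' ≥ 0`. -/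
lemma key_max {φ : ℝ → ℝ} (hφ : ContDiff ℝ 2 φ) {c m t : ℝ}
    (h : IsLocalMax (fun s => (c + m * s) - φ s) t) :
    deriv φ t = m ∧ 0 ≤ deriv (deriv φ) t := by
  have hmin : IsLocalMin (fun s => (-c + -m * s) - (-(φ s))) t := by
    have heq : (fun s => (-c + -m * s) - (-(φ s))) = fun s => -((c + m * s) - φ s) := by
      funext s; ring
    rw [heq]; exact h.neg
  have hφn : ContDiff ℝ 2 (fun s => -(φ s)) := hφ.neg
  obtain ⟨h1, h2⟩ := key_min hφn hmin
  have hφd : Differentiable ℝ φ := hφ.differentiable (by norm_num)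
  have hdn : deriv (fun s => -(φ s)) = fun s => -(deriv φ s) := funext fun s => deriv.fun_neg
  rw [hdn] at h1 h2
  change -deriv φ t = -m at h1
  constructor
  · linarith
  · rw [show (fun s => -(deriv φ s)) = fun s => -(deriv φ s) from rfl, deriv.fun_neg] at h2
    linarith

/-- One-sided first-order condition at a one-sided (right) local minimum. -/
lemma deriv_nonneg_of_right_min {g : ℝ → ℝ} {m η : ℝ} (hg : HasDerivAt g m 0)
    (hη : 0 < η) (h : ∀ s : ℝ, 0 < s → s ≤ η → g 0 ≤ g s) : 0 ≤ m := by
  have hs : Tendsto (slope g 0) (𝓝[≠] (0:ℝ)) (𝓝 m) := hasDerivAt_iff_tendsto_slope.1 hg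
  have hs' : Tendsto (slope g 0) (𝓝[>] (0:ℝ)) (𝓝 m) :=
    hs.mono_left (nhdsWithin_mono _ fun x hx => ne_of_gt hx)
  refine ge_of_tendsto hs' ?_
  filter_upwards [Ioo_mem_nhdsGT_of_mem (Set.mem_Ico.2 ⟨le_refl (0:ℝ), hη⟩),
    self_mem_nhdsWithin] with s hs1 hs2
  have h1 : g 0 ≤ g s := h s hs2 hs1.2.le
  rw [slope_def_field]
  have : (0:ℝ) < s - 0 := by simpa using hs2
  exact div_nonneg (by linarith) this.le


/-- barrier construction in the proof of Theorem 5.1.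
Under the steady assumptions, if `F(r,p) → −∞` as `p_{i₀} → +∞` for some
`i₀`, then there are constants `K₁, K₂ > 0` such that
`u⁺(x) = K₁ − K₂ ρ(x,O)` is a viscosity supersolution of (P),
`u⁻(x) = −K₁ + K₂ ρ(x,O)` is a viscosity subsolution of (P) (recall
`ρ(x,O) = x_i` on the edge `E_i`), and `u⁻ ≤ u⁺` on `Γ`. -/
theorem barrier_construction (N : ℕ) (D : Data N) (C : ℝ)
    (hSteady : Steady D C)
    (hF : ∃ i₀ : Fin N, ∀ (r : ℝ) (p : Fin N → ℝ),
      Filter.Tendsto (fun z : ℝ => D.F r (Function.update p i₀ z))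
        Filter.atTop Filter.atBot) :
    ∃ K₁ > 0, ∃ K₂ > 0,
      IsSupersol D (fun _ t => K₁ - K₂ * t) ∧
      IsSubsol D (fun _ t => -K₁ + K₂ * t) ∧
      ∀ i, ∀ t ∈ Set.Icc (0:ℝ) (D.ℓ i), -K₁ + K₂ * t ≤ K₁ - K₂ * t := by
  obtain ⟨i₀, hFtop⟩ := hF
  obtain ⟨hC, hHam, -, -, hmono, -, hbot⟩ := hSteady
  have hlam := D.lam_pos
  -- choice of K₂
  obtain ⟨A, hA⟩ := Filter.eventually_atTop.1
    ((hFtop 0 (fun _ => 0)).eventually (Filter.eventually_le_atBot 0))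
  obtain ⟨B, hB⟩ := Filter.eventually_atBot.1
    ((hbot i₀ 0 (fun _ => 0)).eventually (Filter.eventually_ge_atTop 0))
  set K₂ : ℝ := max 1 (max A (-B)) with hK₂def
  have hK₂pos : 0 < K₂ := lt_of_lt_of_le one_pos (le_max_left _ _)
  have hFneg : D.F 0 (Function.update (fun _ => 0) i₀ K₂) ≤ 0 :=
    hA K₂ ((le_max_left A (-B)).trans (le_max_right 1 _))
  have hFpos : 0 ≤ D.F 0 (Function.update (fun _ => 0) i₀ (-K₂)) := by
    have h1 : -B ≤ K₂ := (le_max_right A (-B)).trans (le_max_right 1 _)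
    exact hB (-K₂) (by linarith)
  -- bound on H i · 0
  have hMex : ∀ i : Fin N, ∃ Mi : ℝ, ∀ t ∈ Set.Icc (0:ℝ) (D.ℓ i), |D.H i t 0| ≤ Mi := by
    intro i
    have hcont : ContinuousOn (fun t => D.H i t 0) (Set.Icc 0 (D.ℓ i)) := by
      have hmap : ContinuousOn (fun t : ℝ => ((t, (0:ℝ)) : ℝ × ℝ)) (Set.Icc 0 (D.ℓ i)) :=
        (continuous_id.prodMk continuous_const).continuousOn
      exact (D.H_cont i).comp hmap (fun t ht => ⟨ht, Set.mem_univ _⟩)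
    obtain ⟨Mi, hMi⟩ := isCompact_Icc.exists_bound_of_continuousOn hcont
    exact ⟨Mi, fun t ht => by simpa [Real.norm_eq_abs] using hMi t ht⟩
  choose M hM using hMex
  -- choice of K₁
  have hne : (Finset.univ : Finset (Fin N)).Nonempty := ⟨i₀, Finset.mem_univ i₀⟩
  set K₁ : ℝ := 1 + Finset.univ.sup' hne (fun i =>
      max (K₂ * D.ℓ i + |D.h i|) (K₂ * D.ℓ i + (M i + C * K₂) / D.lam)) with hK₁def
  have hK₁a : ∀ i, K₂ * D.ℓ i + |D.h i| + 1 ≤ K₁ := by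
    intro i
    have h1 := Finset.le_sup' (fun i =>
      max (K₂ * D.ℓ i + |D.h i|) (K₂ * D.ℓ i + (M i + C * K₂) / D.lam)) (Finset.mem_univ i)
    have h2 : K₂ * D.ℓ i + |D.h i| ≤
        max (K₂ * D.ℓ i + |D.h i|) (K₂ * D.ℓ i + (M i + C * K₂) / D.lam) := le_max_left _ _
    rw [hK₁def]; linarith
  have hK₁b : ∀ i, K₂ * D.ℓ i + (M i + C * K₂) / D.lam + 1 ≤ K₁ := by
    intro i
    have h1 := Finset.le_sup' (fun i =>
      max (K₂ * D.ℓ i + |D.h i|) (K₂ * D.ℓ i + (M i + C * K₂) / D.lam)) (Finset.mem_univ i)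
    have h2 : K₂ * D.ℓ i + (M i + C * K₂) / D.lam ≤
        max (K₂ * D.ℓ i + |D.h i|) (K₂ * D.ℓ i + (M i + C * K₂) / D.lam) := le_max_right _ _
    rw [hK₁def]; linarith
  have hK₁pos : 0 < K₁ := by
    have h1 := hK₁a i₀
    have h2 : 0 ≤ K₂ * D.ℓ i₀ := mul_nonneg hK₂pos.le (D.ℓ_pos i₀).le
    have h3 : 0 ≤ |D.h i₀| := abs_nonneg _
    linarith
  -- quantitative estimates
  have hlamK : ∀ i : Fin N, ∀ t ∈ Set.Icc (0:ℝ) (D.ℓ i),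
      M i + C * K₂ ≤ D.lam * (K₁ - K₂ * t) := by
    intro i t ht
    have hb := hK₁b i
    have h5 : D.lam * (K₂ * D.ℓ i + (M i + C * K₂) / D.lam + 1) ≤ D.lam * K₁ :=
      mul_le_mul_of_nonneg_left hb hlam.le
    have h6 : D.lam * (K₂ * D.ℓ i + (M i + C * K₂) / D.lam + 1)
        = D.lam * (K₂ * D.ℓ i) + (M i + C * K₂) + D.lam := by
      field_simp
    rw [h6] at h5
    have h7 : D.lam * (K₂ * t) ≤ D.lam * (K₂ * D.ℓ i) :=
      mul_le_mul_of_nonneg_left (mul_le_mul_of_nonneg_left ht.2 hK₂pos.le) hlam.le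
    nlinarith [h5, h7]
  have hHlow : ∀ i, ∀ t ∈ Set.Icc (0:ℝ) (D.ℓ i), -(M i) - C * K₂ ≤ D.H i t (-K₂) := by
    intro i t ht
    have h1 := (hHam i).2 t ht (-K₂) 0
    rw [sub_zero, abs_neg, abs_of_pos hK₂pos] at h1
    have h2 := (abs_le.1 h1).1
    have h3 := (abs_le.1 (hM i t ht)).1
    linarith
  have hHhigh : ∀ i, ∀ t ∈ Set.Icc (0:ℝ) (D.ℓ i), D.H i t K₂ ≤ M i + C * K₂ := by
    intro i t ht
    have h1 := (hHam i).2 t ht K₂ 0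
    rw [sub_zero, abs_of_pos hK₂pos] at h1
    have h2 := (abs_le.1 h1).2
    have h3 := (abs_le.1 (hM i t ht)).2
    linarith
  refine ⟨K₁, hK₁pos, K₂, hK₂pos, ?_, ?_, ?_⟩
  · -- IsSupersol
    refine ⟨fun i => ((continuous_const.sub
        (continuous_const.mul continuous_id)).lowerSemicontinuous).lowerSemicontinuousOn _,
      fun i j => rfl, fun φ hφ => ?_⟩
    obtain ⟨-, hφ2⟩ := hφ
    refine ⟨?_, ?_, ?_⟩
    · -- interior of edges
      intro i t ht hmin
      obtain ⟨δ, hδ, hm⟩ := hmin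
      have hIL : IsLocalMin (fun s => (K₁ + -K₂ * s) - φ i s) t := by
        have hev : ∀ᶠ s in 𝓝 t, (K₁ + -K₂ * t) - φ i t ≤ (K₁ + -K₂ * s) - φ i s := by
          rw [Metric.eventually_nhds_iff]
          refine ⟨min δ (min t (D.ℓ i - t)),
            lt_min hδ (lt_min ht.1 (sub_pos.2 ht.2)), fun s hs => ?_⟩
          rw [Real.dist_eq] at hs
          have hs1 : |s - t| < δ := lt_of_lt_of_le hs (min_le_left _ _)
          have hs2 : |s - t| < t := lt_of_lt_of_le hs ((min_le_right _ _).trans (min_le_left _ _))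
          have hs3 : |s - t| < D.ℓ i - t :=
            lt_of_lt_of_le hs ((min_le_right _ _).trans (min_le_right _ _))
          have habs1 := (abs_lt.1 hs2).1
          have habs2 := (abs_lt.1 hs3).2
          have hsIcc : s ∈ Set.Icc (0:ℝ) (D.ℓ i) := ⟨by linarith, by linarith⟩
          have h2 : K₁ - K₂ * t - φ i t ≤ K₁ - K₂ * s - φ i s := hm s hsIcc hs1
          linarith
        exact hev
      obtain ⟨hd1, hd2⟩ := key_min (hφ2 i) hIL
      have haX : D.a i t * deriv (deriv (φ i)) t ≤ 0 :=
        mul_nonpos_iff.2 (Or.inl ⟨D.a_nonneg i t ⟨ht.1.le, ht.2.le⟩, hd2⟩)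
      simp only [G]
      rw [hd1]
      have h1 := hlamK i t ⟨ht.1.le, ht.2.le⟩
      have h2 := hHlow i t ⟨ht.1.le, ht.2.le⟩
      linarith
    · -- junction point
      intro hminO
      refine Or.inr fun i => ?_
      have hder : ∀ j, deriv (φ j) 0 ≤ -K₂ := by
        intro j
        obtain ⟨δ, hδ, hm⟩ := hminO
        have h0 : 0 < min δ (D.ℓ j) := lt_min hδ (D.ℓ_pos j)
        have hgd : HasDerivAt (fun s => K₁ - K₂ * s - φ j s) (-K₂ - deriv (φ j) 0) 0 := by
          have h1 : HasDerivAt (fun s : ℝ => K₁ - K₂ * s) (-K₂) 0 := by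
            simpa using ((hasDerivAt_id (0:ℝ)).const_mul K₂).const_sub K₁
          exact h1.sub ((hφ2 j).differentiable (by norm_num) 0).hasDerivAt
        have hkey : 0 ≤ -K₂ - deriv (φ j) 0 := by
          refine deriv_nonneg_of_right_min hgd (half_pos h0) ?_
          intro s hs1 hs2
          have hsδ : s < δ := by
            have := min_le_left δ (D.ℓ j); linarith
          have hsl : s ≤ D.ℓ j := by
            have := min_le_right δ (D.ℓ j); linarith
          exact hm j s ⟨hs1.le, hsl⟩ hsδ
        linarith
      have hq : ∀ j, deriv (φ j) 0 ≤ Function.update (fun _ => (0:ℝ)) i₀ (-K₂) j := by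
        intro j
        rcases eq_or_ne j i₀ with rfl | hne'
        · simpa using hder j
        · rw [Function.update_of_ne hne']
          have := hder j; linarith
      have hle : D.F 0 (Function.update (fun _ => 0) i₀ (-K₂)) ≤
          D.F K₁ (fun j => deriv (φ j) 0) :=
        hmono K₁ 0 (fun j => deriv (φ j) 0) _ hK₁pos.le hq
      have : (0:ℝ) ≤ D.F K₁ (fun j => deriv (φ j) 0) := le_trans hFpos hle
      simpa using this
    · -- boundary vertices
      intro i _
      refine Or.inr ?_
      have h1 := hK₁a i
      have h2 := le_abs_self (D.h i)
      show D.h i ≤ K₁ - K₂ * D.ℓ i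
      linarith
  · -- IsSubsol
    refine ⟨fun i => ((continuous_const.add
        (continuous_const.mul continuous_id)).upperSemicontinuous).upperSemicontinuousOn _,
      fun i j => rfl, fun φ hφ => ?_⟩
    obtain ⟨-, hφ2⟩ := hφ
    refine ⟨?_, ?_, ?_⟩
    · -- interior of edges
      intro i t ht hmax
      obtain ⟨δ, hδ, hm⟩ := hmax
      have hIL : IsLocalMax (fun s => (-K₁ + K₂ * s) - φ i s) t := by
        have hev : ∀ᶠ s in 𝓝 t, (-K₁ + K₂ * s) - φ i s ≤ (-K₁ + K₂ * t) - φ i t := by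
          rw [Metric.eventually_nhds_iff]
          refine ⟨min δ (min t (D.ℓ i - t)),
            lt_min hδ (lt_min ht.1 (sub_pos.2 ht.2)), fun s hs => ?_⟩
          rw [Real.dist_eq] at hs
          have hs1 : |s - t| < δ := lt_of_lt_of_le hs (min_le_left _ _)
          have hs2 : |s - t| < t := lt_of_lt_of_le hs ((min_le_right _ _).trans (min_le_left _ _))
          have hs3 : |s - t| < D.ℓ i - t :=
            lt_of_lt_of_le hs ((min_le_right _ _).trans (min_le_right _ _))
          have habs1 := (abs_lt.1 hs2).1
          have habs2 := (abs_lt.1 hs3).2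
          have hsIcc : s ∈ Set.Icc (0:ℝ) (D.ℓ i) := ⟨by linarith, by linarith⟩
          have h2 : -K₁ + K₂ * s - φ i s ≤ -K₁ + K₂ * t - φ i t := hm s hsIcc hs1
          linarith
        exact hev
      obtain ⟨hd1, hd2⟩ := key_max (hφ2 i) hIL
      have haX : 0 ≤ D.a i t * deriv (deriv (φ i)) t :=
        mul_nonneg (D.a_nonneg i t ⟨ht.1.le, ht.2.le⟩) hd2
      simp only [G]
      rw [hd1]
      have h1 := hlamK i t ⟨ht.1.le, ht.2.le⟩
      have h2 := hHhigh i t ⟨ht.1.le, ht.2.le⟩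
      nlinarith
    · -- junction point
      intro hmaxO
      refine Or.inr fun i => ?_
      have hder : ∀ j, K₂ ≤ deriv (φ j) 0 := by
        intro j
        obtain ⟨δ, hδ, hm⟩ := hmaxO
        have h0 : 0 < min δ (D.ℓ j) := lt_min hδ (D.ℓ_pos j)
        have hgd : HasDerivAt (fun s => φ j s - (-K₁ + K₂ * s)) (deriv (φ j) 0 - K₂) 0 := by
          have h1 : HasDerivAt (fun s : ℝ => -K₁ + K₂ * s) K₂ 0 := by
            simpa using ((hasDerivAt_id (0:ℝ)).const_mul K₂).const_add (-K₁)
          exact ((hφ2 j).differentiable (by norm_num) 0).hasDerivAt.sub h1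
        have hkey : 0 ≤ deriv (φ j) 0 - K₂ := by
          refine deriv_nonneg_of_right_min hgd (half_pos h0) ?_
          intro s hs1 hs2
          have hsδ : s < δ := by
            have := min_le_left δ (D.ℓ j); linarith
          have hsl : s ≤ D.ℓ j := by
            have := min_le_right δ (D.ℓ j); linarith
          have h2 : -K₁ + K₂ * s - φ j s ≤ -K₁ + K₂ * 0 - φ j 0 := hm j s ⟨hs1.le, hsl⟩ hsδ
          show φ j 0 - (-K₁ + K₂ * 0) ≤ φ j s - (-K₁ + K₂ * s)
          linarith
        linarith
      have hq : ∀ j, Function.update (fun _ => (0:ℝ)) i₀ K₂ j ≤ deriv (φ j) 0 := by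
        intro j
        rcases eq_or_ne j i₀ with rfl | hne'
        · simpa using hder j
        · rw [Function.update_of_ne hne']
          have := hder j; linarith
      have hle : D.F (-K₁) (fun j => deriv (φ j) 0) ≤
          D.F 0 (Function.update (fun _ => 0) i₀ K₂) :=
        hmono 0 (-K₁) _ (fun j => deriv (φ j) 0) (by linarith) hq
      have : D.F (-K₁) (fun j => deriv (φ j) 0) ≤ 0 := le_trans hle hFneg
      simpa using this
    · -- boundary vertices
      intro i _
      refine Or.inr ?_
      have h1 := hK₁a i
      have h2 := neg_abs_le (D.h i)
      show -K₁ + K₂ * D.ℓ i ≤ D.h i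
      linarith
  · -- ordering of the barriers
    intro i t ht
    have h1 := hK₁a i
    have h2 : K₂ * t ≤ K₂ * D.ℓ i := mul_le_mul_of_nonneg_left ht.2 hK₂pos.le
    have h3 := abs_nonneg (D.h i)
    linarith
end Paper
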